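/- Under the spacing bound t_{k+1} − t_k ≤ T_max < π/Ω and convergence estimates ‖g − g_n‖_{L²} ≤ (T_maxΩ/π)^{n+1}‖g‖_{L²} and ‖e_0‖_{L²} ≤ 2R · 2λ_h·T_max · √(Ω/π), the total reconstruction error satisfies ‖g − g̃_n‖_{L²} ≤ (4λ_h·R·T_max·√(Ωπ))/(π − T_maxΩ) + (T_maxΩ/π)^{n+1}·‖g‖_{L²}. -/

import Mathlib

open Real

/-- total reconstruction error bound, combining the geometric
error bound on the iteration error `e_n = g̃_n − g_n` with the convergence of
the ideal iteration `g_n → g`. -/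
theorem total_reconstruction_error_bound
    {H : Type*} [NormedAddCommGroup H]
    (Tmax Ω lamh : ℝ) (R : ℕ)
    (hTmax : 0 < Tmax) (hΩ : 0 < Ω) (hlamh : 0 < lamh)
    (hnyq : Tmax * Ω < π)
    (g : H) (gn gtn : ℕ → H)
    (hconv : ∀ n : ℕ, ‖g - gn n‖ ≤ (Tmax * Ω / π) ^ (n + 1) * ‖g‖)
    (herr : ∀ n : ℕ, ‖gtn n - gn n‖ ≤
      (2 * (R : ℝ) * (2 * lamh * Tmax) * Real.sqrt (Ω / π)) / (1 - Tmax * Ω / π)) :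
    ∀ n : ℕ, ‖g - gtn n‖ ≤
      4 * lamh * (R : ℝ) * Tmax * Real.sqrt (Ω * π) / (π - Tmax * Ω) +
        (Tmax * Ω / π) ^ (n + 1) * ‖g‖ := by
  intro n
  have hπ : (0:ℝ) < π := Real.pi_pos
  have hsπ : (0:ℝ) < Real.sqrt π := Real.sqrt_pos.mpr hπ
  have heq : (2 * (R : ℝ) * (2 * lamh * Tmax) * Real.sqrt (Ω / π)) / (1 - Tmax * Ω / π)
      = 4 * lamh * (R : ℝ) * Tmax * Real.sqrt (Ω * π) / (π - Tmax * Ω) := by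
    rw [Real.sqrt_mul hΩ.le, Real.sqrt_div hΩ.le]
    have hsq : Real.sqrt π * Real.sqrt π = π := Real.mul_self_sqrt hπ.le
    have hd : 1 - Tmax * Ω / π = (π - Tmax * Ω) / π := by field_simp
    rw [hd, div_div_eq_mul_div]
    congr 1
    field_simp
    linear_combination (-4 * (R : ℝ)) * hsq
  have htri : ‖g - gtn n‖ ≤ ‖g - gn n‖ + ‖gtn n - gn n‖ := by
    calc ‖g - gtn n‖ = ‖(g - gn n) - (gtn n - gn n)‖ := by abel_nf
    _ ≤ ‖g - gn n‖ + ‖gtn n - gn n‖ := norm_sub_le _ _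
  calc ‖g - gtn n‖ ≤ ‖g - gn n‖ + ‖gtn n - gn n‖ := htri
  _ ≤ (Tmax * Ω / π) ^ (n + 1) * ‖g‖ +
      (2 * (R : ℝ) * (2 * lamh * Tmax) * Real.sqrt (Ω / π)) / (1 - Tmax * Ω / π) :=
        add_le_add (hconv n) (herr n)
  _ = 4 * lamh * (R : ℝ) * Tmax * Real.sqrt (Ω * π) / (π - Tmax * Ω) +
        (Tmax * Ω / π) ^ (n + 1) * ‖g‖ := by rw [heq]; ring
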